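/- Fix ε, φ ∈ ℝ with |ε| > 1 and ε = φ. Then for every n there exist exactly two distinct eigenvalues μ_n and ν_n of T_{n,ε,φ} such that μ_n → ε + ε^{-1} and ν_n → ε + ε^{-1} as n → ∞, and for all sufficiently large n the eigenvalues μ_n and ν_n are precisely the eigenvalues of T_{n,ε,φ} lying outside [−2, 2]. -/

import Mathlib

open Matrix Real Filter

/-- The n×n tridiagonal matrix `T_{n,ε,φ}` with `(T)_{11} = ε`, `(T)_{nn} = φ`,
zero elsewhere on the diagonal, and ones on the first super- and subdiagonals. -/
noncomputable def Ttri (n : ℕ) (e f : ℝ) : Matrix (Fin n) (Fin n) ℝ :=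
  fun i j =>
    if i = j then (if (i : ℕ) = 0 then e else if (i : ℕ) = n - 1 then f else 0)
    else if (i : ℕ) + 1 = (j : ℕ) ∨ (j : ℕ) + 1 = (i : ℕ) then 1 else 0

/-- `x` is an eigenvalue of `T_{n,ε,φ}`. -/
def HasEigen (n : ℕ) (e f x : ℝ) : Prop :=
  ∃ v : Fin n → ℝ, v ≠ 0 ∧ (Ttri n e f).mulVec v = x • v

noncomputable def Wv {n : ℕ} (v : Fin n → ℝ) (k : ℕ) : ℝ := if h : k < n then v ⟨k, h⟩ else 0

lemma rowFormula {n : ℕ} (e f : ℝ) (hn : 2 ≤ n) (v : Fin n → ℝ) (i : Fin n) :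
    (Ttri n e f).mulVec v i =
      (if (i:ℕ) = 0 then e * v i else 0) + (if (i:ℕ) = n - 1 then f * v i else 0)
      + (if (i:ℕ) = 0 then 0 else Wv v ((i:ℕ) - 1)) + Wv v ((i:ℕ) + 1) := by
  classical
  have expand : ∀ j : Fin n, Ttri n e f i j * v j =
      (if j = i then ((if (i:ℕ) = 0 then e else 0) + (if (i:ℕ) = n - 1 then f else 0)) * v j else 0)
      + (if (j:ℕ) + 1 = (i:ℕ) then v j else 0)
      + (if (i:ℕ) + 1 = (j:ℕ) then v j else 0) := by
    intro j
    unfold Ttri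
    by_cases h : i = j
    · have hji : j = i := h.symm
      have h2 : ¬ ((j:ℕ) + 1 = (i:ℕ)) := by omega
      have h3 : ¬ ((i:ℕ) + 1 = (j:ℕ)) := by rw [← h]; omega
      rw [if_pos h, if_pos hji, if_neg h2, if_neg h3, add_zero, add_zero]
      have hn1 : ¬ (n - 1 = 0) := by omega
      have hn2 : ¬ ((0:ℕ) = n - 1) := by omega
      by_cases h0 : (i:ℕ) = 0
      · have h1 : ¬ ((i:ℕ) = n - 1) := by omega
        simp [h0, h1, hn1, hn2]
      · by_cases h1 : (i:ℕ) = n - 1 <;> simp [h0, h1, hn1, hn2]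
    · have hji : ¬ (j = i) := fun hh => h hh.symm
      rw [if_neg h, if_neg hji, zero_add]
      by_cases hsub : (j:ℕ) + 1 = (i:ℕ)
      · have h3 : ¬ ((i:ℕ) + 1 = (j:ℕ)) := by omega
        rw [if_pos hsub, if_neg h3, add_zero, if_pos (Or.inr hsub), one_mul]
      · by_cases hsup : (i:ℕ) + 1 = (j:ℕ)
        · rw [if_neg hsub, if_pos hsup, zero_add, if_pos (Or.inl hsup), one_mul]
        · rw [if_neg hsub, if_neg hsup, add_zero, if_neg (by tauto), zero_mul]
  have hm : (Ttri n e f).mulVec v i = ∑ j : Fin n, Ttri n e f i j * v j := rfl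
  rw [hm, Finset.sum_congr rfl (fun j _ => expand j), Finset.sum_add_distrib,
    Finset.sum_add_distrib]
  have s1 : ∑ j : Fin n, (if j = i then ((if (i:ℕ) = 0 then e else 0) + (if (i:ℕ) = n - 1 then f else 0)) * v j else 0)
      = (if (i:ℕ) = 0 then e * v i else 0) + (if (i:ℕ) = n - 1 then f * v i else 0) := by
    rw [Finset.sum_ite_eq' Finset.univ i (fun j => ((if (i:ℕ) = 0 then e else 0) + (if (i:ℕ) = n - 1 then f else 0)) * v j)]
    simp only [Finset.mem_univ, if_true]
    have hn1 : ¬ (n - 1 = 0) := by omega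
    have hn2 : ¬ ((0:ℕ) = n - 1) := by omega
    by_cases h0 : (i:ℕ) = 0
    · have h1 : ¬ ((i:ℕ) = n - 1) := by omega
      simp [h0, h1, hn1, hn2]
      try ring
    · by_cases h1 : (i:ℕ) = n - 1 <;> simp [h0, h1, hn1, hn2] <;> try ring
  have s2 : ∑ j : Fin n, (if (j:ℕ) + 1 = (i:ℕ) then v j else 0)
      = (if (i:ℕ) = 0 then 0 else Wv v ((i:ℕ) - 1)) := by
    by_cases h0 : (i:ℕ) = 0
    · rw [if_pos h0]
      apply Finset.sum_eq_zero
      intro j _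
      rw [if_neg (by omega)]
    · rw [if_neg h0]
      have hlt : (i:ℕ) - 1 < n := by omega
      have : ∀ j : Fin n, ((j:ℕ) + 1 = (i:ℕ)) ↔ j = ⟨(i:ℕ) - 1, hlt⟩ := by
        intro j; rw [Fin.ext_iff]; simp; omega
      rw [Finset.sum_congr rfl (fun j _ => by rw [if_congr (this j) rfl rfl])]
      rw [Finset.sum_ite_eq' Finset.univ _ (fun j => v j)]
      simp [Wv, hlt]
  have s3 : ∑ j : Fin n, (if (i:ℕ) + 1 = (j:ℕ) then v j else 0) = Wv v ((i:ℕ) + 1) := by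
    by_cases h : (i:ℕ) + 1 < n
    · have : ∀ j : Fin n, ((i:ℕ) + 1 = (j:ℕ)) ↔ j = ⟨(i:ℕ) + 1, h⟩ := by
        intro j; rw [Fin.ext_iff]; simp; omega
      rw [Finset.sum_congr rfl (fun j _ => by rw [if_congr (this j) rfl rfl])]
      rw [Finset.sum_ite_eq' Finset.univ _ (fun j => v j)]
      simp [Wv, h]
    · have z : ∑ j : Fin n, (if (i:ℕ) + 1 = (j:ℕ) then v j else 0) = 0 := by
        apply Finset.sum_eq_zero
        intro j _
        rw [if_neg (by omega)]
      rw [z, Wv, dif_neg h]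
  rw [s1, s2, s3]

lemma wv_eq {n : ℕ} (v : Fin n → ℝ) (i : Fin n) : Wv v (i:ℕ) = v i := by
  simp [Wv, i.isLt]

lemma dotSelf {n : ℕ} (v : Fin n → ℝ) : v ⬝ᵥ v = ∑ k ∈ Finset.range n, (Wv v k)^2 := by
  rw [dotProduct, ← Fin.sum_univ_eq_sum_range (fun k => (Wv v k)^2) n]
  apply Finset.sum_congr rfl
  intro i _
  rw [wv_eq]; ring

lemma quadForm {n : ℕ} (e f : ℝ) (hn : 2 ≤ n) (v : Fin n → ℝ) :
    v ⬝ᵥ (Ttri n e f).mulVec v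
      = e * (Wv v 0)^2 + f * (Wv v (n-1))^2
        + 2 * ∑ k ∈ Finset.range (n-1), Wv v k * Wv v (k+1) := by
  classical
  obtain ⟨m, rfl⟩ : ∃ m, n = m + 2 := ⟨n - 2, by omega⟩
  set W := Wv v with hW
  have step : ∀ i : Fin (m+2), v i * (Ttri (m+2) e f).mulVec v i
      = (if (i:ℕ) = 0 then e * (W (i:ℕ))^2 else 0)
        + (if (i:ℕ) = (m+2) - 1 then f * (W (i:ℕ))^2 else 0)
        + (if (i:ℕ) = 0 then 0 else W (i:ℕ) * W ((i:ℕ)-1))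
        + W (i:ℕ) * W ((i:ℕ)+1) := by
    intro i
    rw [rowFormula e f hn v i]
    rw [← wv_eq v i, ← hW]
    by_cases h0 : (i:ℕ) = 0 <;> by_cases h1 : (i:ℕ) = 1 + m <;>
      simp [h0, h1, show (m+2)-1 = 1+m by omega, show ¬(0 = 1+m) by omega] <;> ring
  have hsum : v ⬝ᵥ (Ttri (m+2) e f).mulVec v
      = ∑ k ∈ Finset.range (m+2),
        ((if k = 0 then e * (W k)^2 else 0)
        + (if k = (m+2) - 1 then f * (W k)^2 else 0)
        + (if k = 0 then 0 else W k * W (k-1))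
        + W k * W (k+1)) := by
    rw [dotProduct, Finset.sum_congr rfl (fun i _ => step i),
      ← Fin.sum_univ_eq_sum_range (fun k =>
        (if k = 0 then e * (W k)^2 else 0)
        + (if k = (m+2) - 1 then f * (W k)^2 else 0)
        + (if k = 0 then 0 else W k * W (k-1))
        + W k * W (k+1)) (m+2)]
  rw [hsum]
  rw [Finset.sum_add_distrib, Finset.sum_add_distrib, Finset.sum_add_distrib]
  have S1 : ∑ k ∈ Finset.range (m+2), (if k = 0 then e * (W k)^2 else 0) = e * (W 0)^2 := by
    rw [Finset.sum_ite_eq' (Finset.range (m+2)) 0 (fun k => e * (W k)^2)]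
    simp
  have S2 : ∑ k ∈ Finset.range (m+2), (if k = (m+2) - 1 then f * (W k)^2 else 0)
      = f * (W ((m+2)-1))^2 := by
    rw [Finset.sum_ite_eq' (Finset.range (m+2)) ((m+2)-1) (fun k => f * (W k)^2)]
    simp
  have S3 : ∑ k ∈ Finset.range (m+2), (if k = 0 then 0 else W k * W (k-1))
      = ∑ k ∈ Finset.range (m+1), W (k+1) * W k := by
    rw [Finset.sum_range_succ' (fun k => if k = 0 then 0 else W k * W (k-1)) (m+1)]
    simp
  have S4 : ∑ k ∈ Finset.range (m+2), W k * W (k+1)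
      = ∑ k ∈ Finset.range (m+1), W k * W (k+1) := by
    rw [Finset.sum_range_succ]
    have : W (m+1+1) = 0 := by rw [hW, Wv, dif_neg (by omega)]
    rw [this]; ring
  rw [S1, S2, S3, S4]
  have : ∑ k ∈ Finset.range (m+1), W (k+1) * W k = ∑ k ∈ Finset.range (m+1), W k * W (k+1) :=
    Finset.sum_congr rfl (fun k _ => by ring)
  rw [this]
  have hmm : (m+2) - 1 = m + 1 := by omega
  rw [hmm]
  ring

lemma sum_prod_le (W : ℕ → ℝ) (m : ℕ) :
    2 * ∑ k ∈ Finset.range m, W k * W (k+1) ≤ 2 * ∑ k ∈ Finset.range (m+1), (W k)^2 := by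
  have h1 : ∑ k ∈ Finset.range m, 2 * (W k * W (k+1))
      ≤ ∑ k ∈ Finset.range m, ((W k)^2 + (W (k+1))^2) := by
    apply Finset.sum_le_sum
    intro k _
    nlinarith [sq_nonneg (W k - W (k+1))]
  have h2 : ∑ k ∈ Finset.range m, (W k)^2 ≤ ∑ k ∈ Finset.range (m+1), (W k)^2 := by
    apply Finset.sum_le_sum_of_subset_of_nonneg (Finset.range_subset_range.2 (by omega))
    intro k _ _; positivity
  have h3 : ∑ k ∈ Finset.range m, (W (k+1))^2 ≤ ∑ k ∈ Finset.range (m+1), (W k)^2 := by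
    rw [Finset.sum_range_succ' (fun k => (W k)^2) m]
    nlinarith [sq_nonneg (W 0)]
  rw [Finset.sum_add_distrib] at h1
  rw [← Finset.mul_sum] at h1
  linarith

lemma sum_prod_ge (W : ℕ → ℝ) (m : ℕ) :
    -(2 * ∑ k ∈ Finset.range (m+1), (W k)^2) ≤ 2 * ∑ k ∈ Finset.range m, W k * W (k+1) := by
  have h1 : ∑ k ∈ Finset.range m, (-((W k)^2 + (W (k+1))^2))
      ≤ ∑ k ∈ Finset.range m, 2 * (W k * W (k+1)) := by
    apply Finset.sum_le_sum
    intro k _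
    nlinarith [sq_nonneg (W k + W (k+1))]
  have h2 : ∑ k ∈ Finset.range m, (W k)^2 ≤ ∑ k ∈ Finset.range (m+1), (W k)^2 := by
    apply Finset.sum_le_sum_of_subset_of_nonneg (Finset.range_subset_range.2 (by omega))
    intro k _ _; positivity
  have h3 : ∑ k ∈ Finset.range m, (W (k+1))^2 ≤ ∑ k ∈ Finset.range (m+1), (W k)^2 := by
    rw [Finset.sum_range_succ' (fun k => (W k)^2) m]
    nlinarith [sq_nonneg (W 0)]
  rw [Finset.sum_neg_distrib, Finset.sum_add_distrib] at h1
  rw [← Finset.mul_sum] at h1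
  linarith

lemma ttri_symm (n : ℕ) (e f : ℝ) : (Ttri n e f)ᵀ = Ttri n e f := by
  ext i j
  rw [Matrix.transpose_apply]
  unfold Ttri
  by_cases h : i = j
  · subst h; rfl
  · have hji : ¬ (j = i) := fun hh => h hh.symm
    rw [if_neg h, if_neg hji, if_congr (or_comm) rfl rfl]

lemma eig_orth {n : ℕ} {e f a b : ℝ} {u w : Fin n → ℝ}
    (hu : (Ttri n e f).mulVec u = a • u) (hw : (Ttri n e f).mulVec w = b • w)
    (hab : a ≠ b) : u ⬝ᵥ w = 0 := by
  have h1 : u ⬝ᵥ (Ttri n e f).mulVec w = b * (u ⬝ᵥ w) := by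
    rw [hw, dotProduct_smul, smul_eq_mul]
  have h2 : u ⬝ᵥ (Ttri n e f).mulVec w = a * (u ⬝ᵥ w) := by
    rw [Matrix.dotProduct_mulVec, ← Matrix.mulVec_transpose, ttri_symm, hu,
      smul_dotProduct, smul_eq_mul]
  have : (a - b) * (u ⬝ᵥ w) = 0 := by linarith [h1, h2]
  rcases mul_eq_zero.1 this with h | h
  · exact absurd (by linarith : a = b) hab
  · exact h

lemma dot_self_pos {n : ℕ} {v : Fin n → ℝ} (hv : v ≠ 0) : 0 < v ⬝ᵥ v := by
  have hne : v ⬝ᵥ v ≠ 0 := fun h => hv (dotProduct_self_eq_zero.1 h)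
  have hnn : 0 ≤ v ⬝ᵥ v := by
    rw [dotSelf]
    apply Finset.sum_nonneg
    intro k _; positivity
  exact lt_of_le_of_ne hnn (Ne.symm hne)

lemma eig_lower {n : ℕ} {e f lam : ℝ} (he : 0 ≤ e) (hf : 0 ≤ f) (hn : 2 ≤ n)
    (h : HasEigen n e f lam) : -2 ≤ lam := by
  obtain ⟨v, hv, heq⟩ := h
  have hq : v ⬝ᵥ (Ttri n e f).mulVec v = lam * (v ⬝ᵥ v) := by
    rw [heq, dotProduct_smul, smul_eq_mul]
  have hq2 := quadForm e f hn v
  have hb := sum_prod_ge (Wv v) (n-1)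
  have hrw : (n - 1) + 1 = n := by omega
  rw [hrw] at hb
  have hds := dotSelf v
  have hpos := dot_self_pos hv
  nlinarith [sq_nonneg (Wv v 0), sq_nonneg (Wv v (n-1)), mul_nonneg he (sq_nonneg (Wv v 0)),
    mul_nonneg hf (sq_nonneg (Wv v (n-1)))]

lemma quad_le_of_boundary {n : ℕ} {e f : ℝ} (hn : 2 ≤ n) (v : Fin n → ℝ)
    (h0 : Wv v 0 = 0) (hl : Wv v (n-1) = 0) :
    v ⬝ᵥ (Ttri n e f).mulVec v ≤ 2 * (v ⬝ᵥ v) := by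
  have hq2 := quadForm e f hn v
  have hb := sum_prod_le (Wv v) (n-1)
  have hrw : (n - 1) + 1 = n := by omega
  rw [hrw] at hb
  have hds := dotSelf v
  rw [hq2, h0, hl, hds]
  nlinarith

lemma exists_kernel_vec (M : Matrix (Fin 2) (Fin 3) ℝ) :
    ∃ c : Fin 3 → ℝ, c ≠ 0 ∧ M.mulVec c = 0 := by
  classical
  let φ := M.mulVecLin
  have hker : LinearMap.ker φ ≠ ⊥ := by
    intro hbot
    have h1 := LinearMap.finrank_range_add_finrank_ker φ
    rw [hbot, finrank_bot, add_zero] at h1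
    have h2 : Module.finrank ℝ (LinearMap.range φ) ≤ Module.finrank ℝ (Fin 2 → ℝ) :=
      Submodule.finrank_le _
    simp [Module.finrank_pi] at h1 h2
    omega
  obtain ⟨c, hc, hc0⟩ := Submodule.exists_mem_ne_zero_of_ne_bot hker
  exact ⟨c, hc0, hc⟩

lemma fin3_ne {cc : Fin 3 → ℝ} (h : cc ≠ 0) : cc 0 ≠ 0 ∨ cc 1 ≠ 0 ∨ cc 2 ≠ 0 := by
  by_contra hall
  push_neg at hall
  obtain ⟨h0, h1, h2⟩ := hall
  apply h
  funext j
  fin_cases j <;> assumption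

set_option maxHeartbeats 1000000 in
lemma atMostTwo {n : ℕ} {e f : ℝ} (hn : 2 ≤ n) {a b c : ℝ}
    (ha : HasEigen n e f a) (hb : HasEigen n e f b) (hc : HasEigen n e f c)
    (hab : a ≠ b) (hac : a ≠ c) (hbc : b ≠ c)
    (h2a : 2 < a) (h2b : 2 < b) (h2c : 2 < c) : False := by
  obtain ⟨u1, hu1, he1⟩ := ha
  obtain ⟨u2, hu2, he2⟩ := hb
  obtain ⟨u3, hu3, he3⟩ := hc
  have o12 : u1 ⬝ᵥ u2 = 0 := eig_orth he1 he2 hab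
  have o13 : u1 ⬝ᵥ u3 = 0 := eig_orth he1 he3 hac
  have o23 : u2 ⬝ᵥ u3 = 0 := eig_orth he2 he3 hbc
  have o21 : u2 ⬝ᵥ u1 = 0 := by rw [dotProduct_comm]; exact o12
  have o31 : u3 ⬝ᵥ u1 = 0 := by rw [dotProduct_comm]; exact o13
  have o32 : u3 ⬝ᵥ u2 = 0 := by rw [dotProduct_comm]; exact o23
  set i0 : Fin n := ⟨0, by omega⟩
  set il : Fin n := ⟨n-1, by omega⟩
  obtain ⟨cc, hcc, hker⟩ := exists_kernel_vec ![![u1 i0, u2 i0, u3 i0], ![u1 il, u2 il, u3 il]]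
  set w : Fin n → ℝ := cc 0 • u1 + cc 1 • u2 + cc 2 • u3 with hwdef
  have hw0 : w i0 = 0 := by
    have := congrFun hker 0
    simp [Matrix.mulVec, dotProduct, Fin.sum_univ_three] at this
    simp [hwdef]
    linarith
  have hwl : w il = 0 := by
    have := congrFun hker 1
    simp [Matrix.mulVec, dotProduct, Fin.sum_univ_three] at this
    simp [hwdef]
    linarith
  -- w is nonzero
  have hq1 : 0 < u1 ⬝ᵥ u1 := dot_self_pos hu1
  have hq2 : 0 < u2 ⬝ᵥ u2 := dot_self_pos hu2
  have hq3 : 0 < u3 ⬝ᵥ u3 := dot_self_pos hu3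
  have hww : w ⬝ᵥ w = cc 0 ^2 * (u1 ⬝ᵥ u1) + cc 1 ^2 * (u2 ⬝ᵥ u2) + cc 2 ^2 * (u3 ⬝ᵥ u3) := by
    simp [hwdef, dotProduct_add, add_dotProduct, dotProduct_smul, smul_dotProduct,
      o12, o13, o23, o21, o31, o32, smul_eq_mul]
    ring
  have hTw : (Ttri n e f).mulVec w = cc 0 • (a • u1) + cc 1 • (b • u2) + cc 2 • (c • u3) := by
    simp [hwdef, Matrix.mulVec_add, Matrix.mulVec_smul, he1, he2, he3]
  have hquad : w ⬝ᵥ (Ttri n e f).mulVec w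
      = a * cc 0 ^2 * (u1 ⬝ᵥ u1) + b * cc 1 ^2 * (u2 ⬝ᵥ u2) + c * cc 2 ^2 * (u3 ⬝ᵥ u3) := by
    rw [hTw]
    simp [hwdef, dotProduct_add, add_dotProduct, dotProduct_smul, smul_dotProduct,
      o12, o13, o23, o21, o31, o32, smul_eq_mul]
    ring
  have hwne : cc 0 ≠ 0 ∨ cc 1 ≠ 0 ∨ cc 2 ≠ 0 := fin3_ne hcc
  set Y1 := cc 0 ^2 * (u1 ⬝ᵥ u1) with hY1def
  set Y2 := cc 1 ^2 * (u2 ⬝ᵥ u2) with hY2def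
  set Y3 := cc 2 ^2 * (u3 ⬝ᵥ u3) with hY3def
  have hY1 : 0 ≤ Y1 := by positivity
  have hY2 : 0 ≤ Y2 := by positivity
  have hY3 : 0 ≤ Y3 := by positivity
  have hX : 0 < Y1 + Y2 + Y3 := by
    rcases hwne with h | h | h
    · have : 0 < Y1 := by rw [hY1def]; positivity
      linarith
    · have : 0 < Y2 := by rw [hY2def]; positivity
      linarith
    · have : 0 < Y3 := by rw [hY3def]; positivity
      linarith
  have hgt : 2 * (w ⬝ᵥ w) < w ⬝ᵥ (Ttri n e f).mulVec w := by
    rw [hww, hquad]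
    have t1 : 0 ≤ (a - 2) * Y1 := mul_nonneg (by linarith) hY1
    have t2 : 0 ≤ (b - 2) * Y2 := mul_nonneg (by linarith) hY2
    have t3 : 0 ≤ (c - 2) * Y3 := mul_nonneg (by linarith) hY3
    rcases hwne with h | h | h
    · have hp : 0 < Y1 := by rw [hY1def]; positivity
      have : 0 < (a - 2) * Y1 := mul_pos (by linarith) hp
      nlinarith
    · have hp : 0 < Y2 := by rw [hY2def]; positivity
      have : 0 < (b - 2) * Y2 := mul_pos (by linarith) hp
      nlinarith
    · have hp : 0 < Y3 := by rw [hY3def]; positivity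
      have : 0 < (c - 2) * Y3 := mul_pos (by linarith) hp
      nlinarith
  have hle : w ⬝ᵥ (Ttri n e f).mulVec w ≤ 2 * (w ⬝ᵥ w) := by
    apply quad_le_of_boundary hn
    · rw [Wv, dif_pos (by omega : 0 < n)]
      exact hw0
    · rw [Wv, dif_pos (by omega : n - 1 < n)]
      exact hwl
  linarith

lemma exists_two_eigen_aux {n : ℕ} (A : Matrix (Fin n) (Fin n) ℝ) (hA : A.IsHermitian) (hn : 2 ≤ n)
    (h01 : A ⟨0, by omega⟩ ⟨1, by omega⟩ = 1) :
    ∃ a b : ℝ, a ≠ b ∧ (∃ v : Fin n → ℝ, v ≠ 0 ∧ A.mulVec v = a • v)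
      ∧ (∃ v : Fin n → ℝ, v ≠ 0 ∧ A.mulVec v = b • v) := by
  classical
  by_cases hcon : ∃ i j : Fin n, hA.eigenvalues i ≠ hA.eigenvalues j
  · obtain ⟨i, j, hij⟩ := hcon
    refine ⟨hA.eigenvalues i, hA.eigenvalues j, hij, ⟨hA.eigenvectorBasis i, ?_, hA.mulVec_eigenvectorBasis i⟩,
      ⟨hA.eigenvectorBasis j, ?_, hA.mulVec_eigenvectorBasis j⟩⟩
    · exact fun h0 => hA.eigenvectorBasis.orthonormal.ne_zero i (by ext k; simpa using congrFun h0 k)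
    · exact fun h0 => hA.eigenvectorBasis.orthonormal.ne_zero j (by ext k; simpa using congrFun h0 k)
  · exfalso
    push_neg at hcon
    set c := hA.eigenvalues ⟨0, by omega⟩ with hc
    have heq : Matrix.toEuclideanLin A = c • LinearMap.id := by
      apply hA.eigenvectorBasis.toBasis.ext
      intro i
      rw [OrthonormalBasis.coe_toBasis]
      rw [Matrix.toEuclideanLin_apply]
      have h1 : A *ᵥ ⇑(hA.eigenvectorBasis i) = hA.eigenvalues i • ⇑(hA.eigenvectorBasis i) :=
        hA.mulVec_eigenvectorBasis i
      rw [hcon i ⟨0, by omega⟩] at h1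
      simp only [LinearMap.smul_apply, LinearMap.id_apply]; rw [h1]; rfl
    set i1 : Fin n := ⟨1, by omega⟩
    set j0 : Fin n := ⟨0, by omega⟩
    set y : EuclideanSpace ℝ (Fin n) := (WithLp.equiv 2 (Fin n → ℝ)).symm (Pi.single i1 1) with hy
    have h2 : Matrix.toEuclideanLin A y = c • y := by rw [heq]; simp
    have h3 : (A *ᵥ Pi.single i1 (1:ℝ)) j0 = c * (Pi.single i1 (1:ℝ) : Fin n → ℝ) j0 := by
      exact congrArg (fun x : EuclideanSpace ℝ (Fin n) => x j0) h2
    have hne : j0 ≠ i1 := by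
      intro hh; rw [Fin.ext_iff] at hh; simp [i1, j0] at hh
    rw [Matrix.mulVec_single] at h3
    rw [Pi.single_apply, if_neg hne] at h3
    simp at h3
    rw [h3] at h01
    simp at h01

lemma exists_two_eigen {n : ℕ} (e f : ℝ) (hn : 2 ≤ n) :
    ∃ a b : ℝ, a ≠ b ∧ HasEigen n e f a ∧ HasEigen n e f b := by
  have hA : (Ttri n e f).IsHermitian := by
    rw [Matrix.IsHermitian, Matrix.conjTranspose_eq_transpose_of_trivial]
    exact ttri_symm n e f
  have h01 : Ttri n e f ⟨0, by omega⟩ ⟨1, by omega⟩ = 1 := by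
    unfold Ttri
    rw [if_neg, if_pos]
    · left; simp
    · intro hh; rw [Fin.ext_iff] at hh; simp at hh
  exact exists_two_eigen_aux (Ttri n e f) hA hn h01

lemma eig_of_root {n : ℕ} (e : ℝ) (hn : 2 ≤ n) {z : ℝ} (hz : 1 < z)
    (hsq : (1 - e*z)^2 = (z - e)^2 * (z^n)^2) : HasEigen n e e (z + z⁻¹) := by
  have hz0 : z ≠ 0 := by linarith
  have hzpos : (0:ℝ) < z := by linarith
  set vg : ℕ → ℝ := fun k => (z - e) * z^(n+k) - (1 - e*z) * z^(n-1-k) with hvg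
  set v : Fin n → ℝ := fun i => vg (i:ℕ) with hv
  have hWv : ∀ k, k < n → Wv v k = vg k := by
    intro k hk
    simp [Wv, hk, hv]
  have hWtop : Wv v n = 0 := by simp [Wv]
  have hzz : z * (z + z⁻¹) = z^2 + 1 := by field_simp
  refine ⟨v, ?_, ?_⟩
  · intro h0
    have h1 : v ⟨0, by omega⟩ = 0 := by rw [h0]; rfl
    have h2 : v ⟨0, by omega⟩ = z^(n-1) * (z^2 - 1) := by
      show vg 0 = z^(n-1) * (z^2 - 1)
      rw [hvg]
      simp only [Nat.add_zero, Nat.sub_zero]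
      have e1 : z^n = z^(n-1) * z := by
        rw [← pow_succ]
        congr 1
        omega
      rw [e1]
      ring
    rw [h2] at h1
    have hpow : (0:ℝ) < z^(n-1) := pow_pos hzpos _
    have hz2 : (0:ℝ) < z^2 - 1 := by nlinarith
    nlinarith [mul_pos hpow hz2]
  · funext i
    rw [rowFormula e e hn v i]
    apply mul_left_cancel₀ hz0
    have hsmul : ((z + z⁻¹) • v) i = (z + z⁻¹) * vg (i:ℕ) := rfl
    rw [hsmul, ← mul_assoc, hzz]
    by_cases h0 : (i:ℕ) = 0
    · have h1 : ¬ ((i:ℕ) = n - 1) := by omega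
      rw [if_pos h0, if_neg h1, if_pos h0, hWv ((i:ℕ)+1) (by omega)]
      have hvi : v i = vg (i:ℕ) := rfl
      rw [hvi, h0]
      rw [hvg]
      simp only
      rw [show n + 0 = (n-2) + 2 by omega, show n - 1 - 0 = (n-2) + 1 by omega,
        show n + 1 = (n-2) + 3 by omega, show n - 1 - 1 = n - 2 by omega]
      set u := z^(n-2) with hu
      rw [show (n-2) + 2 = (n-2) + 1 + 1 by omega]
      rw [pow_succ, pow_succ, show (n-2)+3 = (n-2)+1+1+1 by omega, pow_succ, pow_succ, pow_succ]
      ring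
    · by_cases h1 : (i:ℕ) = n - 1
      · rw [if_neg h0, if_pos h1, if_neg h0, hWv ((i:ℕ)-1) (by omega),
          show (i:ℕ) + 1 = n by omega, hWtop]
        have hvi : v i = vg (i:ℕ) := rfl
        rw [hvi, h1, hvg]
        simp only
        rw [show n + (n-1) = (2*n-2) + 1 by omega, show n - 1 - (n-1) = 0 by omega,
          show n - 1 - 1 = n - 2 by omega]
        rw [show n + (n-2) = 2*n-2 by omega, show n - 1 - (n-2) = 1 by omega]
        have hsq' : (1 - e*z)^2 = (z-e)^2 * z^(2*n-2) * z^2 := by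
          rw [hsq]
          have hpows : (z^n)^2 = z^(2*n-2) * z^2 := by
            rw [← pow_mul, ← pow_add]
            congr 1
            omega
          rw [hpows, mul_assoc]
        set u := z^(2*n-2) with hu
        rw [pow_succ, pow_one, pow_zero]
        linear_combination hsq'
      · rw [if_neg h0, if_neg h1, if_neg h0, hWv ((i:ℕ)-1) (by omega),
          hWv ((i:ℕ)+1) (by omega)]
        simp only [hvg]
        obtain ⟨j, hj⟩ : ∃ j, (i:ℕ) = j + 1 := ⟨(i:ℕ) - 1, by omega⟩
        obtain ⟨c, hc⟩ : ∃ c, n = j + c + 3 := ⟨n - j - 3, by omega⟩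
        rw [hj]
        subst hc
        rw [show j + 1 - 1 = j by omega,
          show j + c + 3 + j = 2*j + c + 3 by omega,
          show j + c + 3 - 1 - j = c + 2 by omega,
          show j + c + 3 + (j+1) = 2*j + c + 4 by omega,
          show j + c + 3 - 1 - (j+1) = c + 1 by omega,
          show j + c + 3 + (j+1+1) = 2*j + c + 5 by omega,
          show j + c + 3 - 1 - (j+1+1) = c by omega]
        ring

lemma inv_add_lt {a b : ℝ} (ha : 1 ≤ a) (hab : a < b) : a + a⁻¹ < b + b⁻¹ := by
  have ha0 : 0 < a := by linarith
  have hb0 : 0 < b := by linarith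
  have key : b + b⁻¹ - (a + a⁻¹) = (b - a) * (a*b - 1) / (a*b) := by
    field_simp
    ring
  have h1 : 0 < (b - a) * (a*b - 1) / (a*b) := by
    apply div_pos
    · apply mul_pos (by linarith)
      nlinarith
    · positivity
  linarith

lemma inv_add_le {a b : ℝ} (ha : 1 ≤ a) (hab : a ≤ b) : a + a⁻¹ ≤ b + b⁻¹ := by
  rcases eq_or_lt_of_le hab with rfl | h
  · exact le_refl _
  · exact le_of_lt (inv_add_lt ha h)

lemma two_lt_self_add_inv {z : ℝ} (hz : 1 < z) : 2 < z + z⁻¹ := by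
  have h := inv_add_lt (le_refl 1) hz
  have : (1:ℝ)⁻¹ = 1 := inv_one
  linarith

lemma left_root (e : ℝ) (he : 1 < e) (n : ℕ)
    (hc : (e^2 - 1) * (((1+e)/2)⁻¹)^n ≤ e - (1+e)/2) :
    ∃ z : ℝ, e - (e^2-1) * (((1+e)/2)⁻¹)^n ≤ z ∧ z < e ∧ 1 < z ∧
      (1 - e*z)^2 = (z - e)^2 * (z^n)^2 := by
  set r := (1+e)/2 with hr
  have hr1 : 1 < r := by rw [hr]; linarith
  have hre : r < e := by rw [hr]; linarith
  have hr0 : 0 < r := by linarith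
  set d := (e^2 - 1) * (r⁻¹)^n with hd
  have hd0 : 0 < d := by
    apply mul_pos (by nlinarith)
    positivity
  set l := e - d with hl
  have hlr : r ≤ l := by rw [hl]; linarith [hc]
  have hle : l < e := by rw [hl]; linarith
  have hl1 : 1 < l := lt_of_lt_of_le hr1 hlr
  set g : ℝ → ℝ := fun z => (z - e) * z^n + (e*z - 1) with hg
  have hcont : ContinuousOn g (Set.Icc l e) := by
    apply Continuous.continuousOn
    fun_prop
  have hge : g e = e^2 - 1 := by rw [hg]; simp; ring
  have hgl : g l < 0 := by
    have hln : r^n ≤ l^n := pow_le_pow_left₀ (by linarith) hlr n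
    have hcancel : (r⁻¹)^n * r^n = 1 := by
      rw [← mul_pow]
      simp [ne_of_gt hr0]
    have h1 : (e^2 - 1) ≤ d * l^n := by
      rw [hd]
      calc e^2 - 1 = (e^2-1) * ((r⁻¹)^n * r^n) := by rw [hcancel]; ring
      _ = (e^2-1) * (r⁻¹)^n * r^n := by ring
      _ ≤ (e^2-1) * (r⁻¹)^n * l^n := by
          apply mul_le_mul_of_nonneg_left hln
          positivity
    have h2 : g l = -(d * l^n) + (e*l - 1) := by
      rw [hg, hl]
      simp only
      ring
    have h3 : e * l - 1 < e^2 - 1 := by nlinarith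
    rw [h2]
    linarith
  have hsub := intermediate_value_Icc (le_of_lt hle) hcont
  have h0mem : (0:ℝ) ∈ Set.Icc (g l) (g e) := by
    constructor
    · linarith
    · rw [hge]; nlinarith
  obtain ⟨z, hzmem, hgz⟩ := hsub h0mem
  refine ⟨z, hzmem.1, ?_, lt_of_lt_of_le hl1 hzmem.1, ?_⟩
  · rcases eq_or_lt_of_le hzmem.2 with rfl | h
    · exfalso; rw [hge] at hgz; nlinarith
    · exact h
  · have hlin : (z - e) * z^n + (e*z - 1) = 0 := hgz
    linear_combination (-(1 - e*z + (z-e)*z^n)) * hlin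

lemma right_root (e : ℝ) (he : 1 < e) (n : ℕ)
    (hc : (e^2 + e) * (e⁻¹)^n ≤ 1) :
    ∃ z : ℝ, z ≤ e + (e^2+e) * (e⁻¹)^n ∧ e < z ∧
      (1 - e*z)^2 = (z - e)^2 * (z^n)^2 := by
  have he0 : 0 < e := by linarith
  set d := (e^2 + e) * (e⁻¹)^n with hd
  have hd0 : 0 < d := by
    apply mul_pos (by nlinarith)
    positivity
  set u := e + d with hu
  have hue : e < u := by rw [hu]; linarith
  have hu1 : u ≤ e + 1 := by rw [hu]; linarith [hc]
  set g : ℝ → ℝ := fun z => (e*z - 1) - (z - e) * z^n with hg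
  have hcont : ContinuousOn g (Set.Icc e u) := by
    apply Continuous.continuousOn
    fun_prop
  have hge : g e = e^2 - 1 := by rw [hg]; simp; ring
  have hgu : g u < 0 := by
    have hun : e^n ≤ u^n := pow_le_pow_left₀ (le_of_lt he0) (le_of_lt hue) n
    have hcancel : (e⁻¹)^n * e^n = 1 := by
      rw [← mul_pow]
      simp [ne_of_gt he0]
    have h1 : (e^2 + e) ≤ d * u^n := by
      rw [hd]
      calc e^2 + e = (e^2+e) * ((e⁻¹)^n * e^n) := by rw [hcancel]; ring
      _ = (e^2+e) * (e⁻¹)^n * e^n := by ring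
      _ ≤ (e^2+e) * (e⁻¹)^n * u^n := by
          apply mul_le_mul_of_nonneg_left hun
          positivity
    have h2 : g u = (e*u - 1) - d * u^n := by
      rw [hg, hu]
      simp only
      ring
    have h3 : e * u - 1 ≤ e^2 + e - 1 := by nlinarith
    rw [h2]
    linarith
  have hsub := intermediate_value_Icc' (le_of_lt hue) hcont
  have h0mem : (0:ℝ) ∈ Set.Icc (g u) (g e) := by
    constructor
    · linarith
    · rw [hge]; nlinarith
  obtain ⟨z, hzmem, hgz⟩ := hsub h0mem
  refine ⟨z, hzmem.2, ?_, ?_⟩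
  · rcases eq_or_lt_of_le hzmem.1 with h | h
    · exfalso; rw [← h, hge] at hgz; nlinarith
    · exact h
  · have hlin : (e*z - 1) - (z - e) * z^n = 0 := hgz
    linear_combination (-(1 - e*z - (z-e)*z^n)) * hlin

theorem core (e : ℝ) (he : 1 < e) :
    ∃ mu nu : ℕ → ℝ,
      (∀ n, 2 ≤ n → mu n ≠ nu n ∧ HasEigen n e e (mu n) ∧ HasEigen n e e (nu n)) ∧
      Tendsto mu atTop (nhds (e + e⁻¹)) ∧
      Tendsto nu atTop (nhds (e + e⁻¹)) ∧
      ∀ᶠ n in atTop, ∀ lam : ℝ, HasEigen n e e lam →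
        (lam ∉ Set.Icc (-2 : ℝ) 2 ↔ (lam = mu n ∨ lam = nu n)) := by
  have he0 : (0:ℝ) < e := by linarith
  set r := (1+e)/2 with hr
  have hr1 : 1 < r := by rw [hr]; linarith
  have hre : r < e := by rw [hr]; linarith
  set L : ℕ → ℝ := fun n => e - (e^2-1) * (r⁻¹)^n with hL
  set U : ℕ → ℝ := fun n => e + (e^2+e) * (e⁻¹)^n with hU
  have hrpow : Tendsto (fun n : ℕ => (e^2-1) * (r⁻¹)^n) atTop (nhds 0) := by
    have h1 : Tendsto (fun n : ℕ => (r⁻¹)^n) atTop (nhds 0) := by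
      apply tendsto_pow_atTop_nhds_zero_of_lt_one
      · positivity
      · rw [inv_lt_one_iff₀]; right; exact hr1
    simpa using h1.const_mul (e^2-1)
  have hepow : Tendsto (fun n : ℕ => (e^2+e) * (e⁻¹)^n) atTop (nhds 0) := by
    have h1 : Tendsto (fun n : ℕ => (e⁻¹)^n) atTop (nhds 0) := by
      apply tendsto_pow_atTop_nhds_zero_of_lt_one
      · positivity
      · rw [inv_lt_one_iff₀]; right; exact he
    simpa using h1.const_mul (e^2+e)
  have hLtend : Tendsto L atTop (nhds e) := by
    rw [hL]
    simpa using (tendsto_const_nhds (x := e) (f := atTop)).sub hrpow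
  have hUtend : Tendsto U atTop (nhds e) := by
    rw [hU]
    simpa using (tendsto_const_nhds (x := e) (f := atTop)).add hepow
  have hene : e ≠ 0 := ne_of_gt he0
  have hLbtend : Tendsto (fun n => L n + (L n)⁻¹) atTop (nhds (e + e⁻¹)) :=
    hLtend.add (hLtend.inv₀ hene)
  have hUbtend : Tendsto (fun n => U n + (U n)⁻¹) atTop (nhds (e + e⁻¹)) :=
    hUtend.add (hUtend.inv₀ hene)
  have hev1 : ∀ᶠ n in atTop, (e^2-1) * (r⁻¹)^n ≤ e - r :=
    hrpow.eventually_le_const (by linarith)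
  have hev2 : ∀ᶠ n in atTop, (e^2+e) * (e⁻¹)^n ≤ 1 :=
    hepow.eventually_le_const (by linarith)
  have hbig : ∀ᶠ n in atTop, ∃ a b : ℝ,
      (a ≠ b ∧ HasEigen n e e a ∧ HasEigen n e e b) ∧
      (2 < a ∧ 2 < b ∧ L n + (L n)⁻¹ ≤ a ∧ a ≤ e + e⁻¹ ∧ e + e⁻¹ ≤ b ∧ b ≤ U n + (U n)⁻¹) := by
    filter_upwards [hev1, hev2, eventually_ge_atTop 2] with n h1 h2 hn2
    obtain ⟨z1, hz1L, hz1e, hz11, hsq1⟩ := left_root e he n h1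
    obtain ⟨z2, hz2U, hz2e, hsq2⟩ := right_root e he n h2
    have hz21 : 1 < z2 := lt_trans he hz2e
    have hLr : r ≤ L n := by rw [hL]; simp only; linarith
    refine ⟨z1 + z1⁻¹, z2 + z2⁻¹, ⟨?_, eig_of_root e hn2 hz11 hsq1, eig_of_root e hn2 hz21 hsq2⟩,
      two_lt_self_add_inv hz11, two_lt_self_add_inv hz21, ?_, ?_, ?_, ?_⟩
    · have ha : z1 + z1⁻¹ < e + e⁻¹ := inv_add_lt (le_of_lt hz11) hz1e
      have hb : e + e⁻¹ < z2 + z2⁻¹ := inv_add_lt (le_of_lt he) hz2e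
      intro hcon
      rw [hcon] at ha
      linarith
    · exact inv_add_le (by linarith) hz1L
    · exact le_of_lt (inv_add_lt (le_of_lt hz11) hz1e)
    · exact le_of_lt (inv_add_lt (le_of_lt he) hz2e)
    · exact inv_add_le (le_of_lt hz21) hz2U
  obtain ⟨N, hN⟩ := eventually_atTop.1 hbig
  set M := max N 2 with hM
  have htot : ∀ n : ℕ, ∃ a b : ℝ,
      (2 ≤ n → (a ≠ b ∧ HasEigen n e e a ∧ HasEigen n e e b)) ∧
      (M ≤ n → (2 < a ∧ 2 < b ∧ L n + (L n)⁻¹ ≤ a ∧ a ≤ e + e⁻¹ ∧ e + e⁻¹ ≤ b ∧ b ≤ U n + (U n)⁻¹)) := by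
    intro n
    by_cases hMn : M ≤ n
    · obtain ⟨a, b, hP, hB⟩ := hN n (le_trans (le_max_left N 2) hMn)
      exact ⟨a, b, fun _ => hP, fun _ => hB⟩
    · by_cases h2 : 2 ≤ n
      · obtain ⟨a, b, hab, ha, hb⟩ := exists_two_eigen e e h2
        exact ⟨a, b, fun _ => ⟨hab, ha, hb⟩, fun h => absurd h hMn⟩
      · exact ⟨0, 1, fun h => absurd h h2, fun h => absurd h hMn⟩
  choose mu nu hprop using htot
  refine ⟨mu, nu, fun n hn => (hprop n).1 hn, ?_, ?_, ?_⟩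
  · apply tendsto_of_tendsto_of_tendsto_of_le_of_le' hLbtend tendsto_const_nhds
    · filter_upwards [eventually_ge_atTop M] with n hn
      exact ((hprop n).2 hn).2.2.1
    · filter_upwards [eventually_ge_atTop M] with n hn
      exact ((hprop n).2 hn).2.2.2.1
  · apply tendsto_of_tendsto_of_tendsto_of_le_of_le' tendsto_const_nhds hUbtend
    · filter_upwards [eventually_ge_atTop M] with n hn
      exact ((hprop n).2 hn).2.2.2.2.1
    · filter_upwards [eventually_ge_atTop M] with n hn
      exact ((hprop n).2 hn).2.2.2.2.2
  · filter_upwards [eventually_ge_atTop M] with n hMn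
    intro lam hlam
    have h2n : 2 ≤ n := le_trans (le_max_right N 2) hMn
    obtain ⟨hne, hmuE, hnuE⟩ := (hprop n).1 h2n
    obtain ⟨hmu2, hnu2, _⟩ := (hprop n).2 hMn
    constructor
    · intro hnot
      have hgeneg : -2 ≤ lam := eig_lower (by linarith) (by linarith) h2n hlam
      have hgt2 : 2 < lam := by
        rcases lt_or_ge 2 lam with h | h
        · exact h
        · exact absurd ⟨hgeneg, h⟩ hnot
      by_contra hcon
      push_neg at hcon
      exact atMostTwo h2n hmuE hnuE hlam hne (Ne.symm hcon.1) (Ne.symm hcon.2) hmu2 hnu2 hgt2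
    · intro h
      rcases h with rfl | rfl
      · simp only [Set.mem_Icc, not_and, not_le]
        intro _
        linarith
      · simp only [Set.mem_Icc, not_and, not_le]
        intro _
        linarith

lemma hasEigen_neg {n : ℕ} {e f x : ℝ} (hn : 2 ≤ n) (h : HasEigen n e f x) :
    HasEigen n (-e) (-f) (-x) := by
  obtain ⟨v, hv, hveq⟩ := h
  set w : Fin n → ℝ := fun i => (-1)^(i:ℕ) * v i with hw
  have hWw : ∀ k, Wv w k = (-1)^k * Wv v k := by
    intro k
    by_cases hk : k < n
    · simp [Wv, hk, hw]
    · simp [Wv, hk]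
  refine ⟨w, ?_, ?_⟩
  · intro h0
    apply hv
    funext i
    have := congrFun h0 i
    simp only [hw, Pi.zero_apply] at this ⊢
    rcases mul_eq_zero.1 this with h | h
    · exact absurd h (by positivity)
    · exact h
  · funext i
    rw [rowFormula (-e) (-f) hn w i]
    have hrow := congrFun hveq i
    rw [rowFormula e f hn v i] at hrow
    have hxv : (x • v) i = x * v i := rfl
    rw [hxv] at hrow
    have hxw : ((-x) • w) i = -(-1:ℝ)^(i:ℕ) * (x * v i) := by
      show (-x) * ((-1)^(i:ℕ) * v i) = _
      ring
    rw [hxw]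
    have t4 : Wv w ((i:ℕ)+1) = -(-1:ℝ)^(i:ℕ) * Wv v ((i:ℕ)+1) := by
      rw [hWw, pow_succ]
      ring
    have t1 : (if (i:ℕ) = 0 then (-e) * w i else 0)
        = -(-1:ℝ)^(i:ℕ) * (if (i:ℕ) = 0 then e * v i else 0) := by
      by_cases h0 : (i:ℕ) = 0
      · rw [if_pos h0, if_pos h0]
        show (-e) * ((-1)^(i:ℕ) * v i) = _
        rw [h0]
        ring
      · rw [if_neg h0, if_neg h0]
        ring
    have t2 : (if (i:ℕ) = n - 1 then (-f) * w i else 0)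
        = -(-1:ℝ)^(i:ℕ) * (if (i:ℕ) = n - 1 then f * v i else 0) := by
      by_cases h1 : (i:ℕ) = n - 1
      · rw [if_pos h1, if_pos h1]
        show (-f) * ((-1)^(i:ℕ) * v i) = _
        ring
      · rw [if_neg h1, if_neg h1]
        ring
    have t3 : (if (i:ℕ) = 0 then 0 else Wv w ((i:ℕ)-1))
        = -(-1:ℝ)^(i:ℕ) * (if (i:ℕ) = 0 then 0 else Wv v ((i:ℕ)-1)) := by
      by_cases h0 : (i:ℕ) = 0
      · rw [if_pos h0, if_pos h0]
        ring
      · rw [if_neg h0, if_neg h0, hWw]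
        obtain ⟨j, hj⟩ : ∃ j, (i:ℕ) = j + 1 := ⟨(i:ℕ) - 1, by omega⟩
        rw [hj, Nat.add_sub_cancel, pow_succ]
        ring
    rw [t1, t2, t3, t4]
    linear_combination (-(-1:ℝ)^(i:ℕ)) * hrow

theorem stmt10 (e f : ℝ) (he : 1 < |e|) (hef : e = f) :
    ∃ mu nu : ℕ → ℝ,
      (∀ n, 2 ≤ n → mu n ≠ nu n ∧ HasEigen n e f (mu n) ∧ HasEigen n e f (nu n)) ∧
      Tendsto mu atTop (nhds (e + e⁻¹)) ∧
      Tendsto nu atTop (nhds (e + e⁻¹)) ∧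
      ∀ᶠ n in atTop, ∀ lam : ℝ, HasEigen n e f lam →
        (lam ∉ Set.Icc (-2 : ℝ) 2 ↔ (lam = mu n ∨ lam = nu n)) := by
  subst hef
  rcases lt_or_ge 0 e with hpos | hneg
  · have he1 : 1 < e := by
      rw [abs_of_pos hpos] at he
      exact he
    exact core e he1
  · have he1 : 1 < -e := by
      rw [abs_of_nonpos hneg] at he
      exact he
    obtain ⟨mu, nu, h1, h2, h3, h4⟩ := core (-e) he1
    have hkey : ∀ n x, 2 ≤ n → (HasEigen n e e x ↔ HasEigen n (-e) (-e) (-x)) := by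
      intro n x hn
      constructor
      · exact hasEigen_neg hn
      · intro h
        have := hasEigen_neg hn h
        simpa using this
    refine ⟨fun n => -(mu n), fun n => -(nu n), ?_, ?_, ?_, ?_⟩
    · intro n hn
      obtain ⟨hne, hmu, hnu⟩ := h1 n hn
      refine ⟨?_, ?_, ?_⟩
      · intro hc
        apply hne
        linarith [neg_injective hc]
      · rw [hkey n _ hn]
        simpa using hmu
      · rw [hkey n _ hn]
        simpa using hnu
    · have hne0 : e ≠ 0 := by intro h0; rw [h0] at he1; norm_num at he1
      have : e + e⁻¹ = -(-e + (-e)⁻¹) := by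
        field_simp
        ring
      rw [this]
      exact h2.neg
    · have hne0 : e ≠ 0 := by intro h0; rw [h0] at he1; norm_num at he1
      have : e + e⁻¹ = -(-e + (-e)⁻¹) := by
        field_simp
        ring
      rw [this]
      exact h3.neg
    · filter_upwards [h4, eventually_ge_atTop 2] with n hn hn2
      intro lam hlam
      have hlam' : HasEigen n (-e) (-e) (-lam) := (hkey n lam hn2).1 hlam
      have := hn (-lam) hlam'
      constructor
      · intro hnot
        simp only [Set.mem_Icc, not_and, not_le] at hnot
        have hout : -lam ∉ Set.Icc (-2:ℝ) 2 := by
          simp only [Set.mem_Icc, not_and, not_le]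
          intro hge
          by_contra hcc
          push_neg at hcc
          have := hnot (by linarith)
          linarith
        rcases this.1 hout with h | h
        · left; linarith
        · right; linarith
      · intro h
        have hh : -lam = mu n ∨ -lam = nu n := by
          rcases h with h | h
          · left; rw [h, neg_neg]
          · right; rw [h, neg_neg]
        have hnotneg := this.2 hh
        simp only [Set.mem_Icc, not_and, not_le] at hnotneg ⊢
        intro hge
        by_contra hcc
        push_neg at hcc
        have h1' : -2 ≤ -lam := by linarith
        have h2' : -lam ≤ 2 := by linarith
        exact absurd (hnotneg h1') (by linarith)
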